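/- The SLSHT distribution component of a band-limited signal f is a finite linear combination of the signal's spectral coefficients: g_f(ŷ; n) = Σ_c f_c ψ_{n,c}(ŷ), where ψ_{n,c}(ŷ) = Σ_{r=0}^{N_h} √(4π/(2p+1)) conj(Y_p^q(ŷ)) h_p^0 T(c; r; n) with (p,q) ↔ r; in particular, each g_f(·; n) is band-limited with maximum spectral degree L_h, the band-limit of the window h. -/

import Mathlib

open Real MeasureTheory intervalIntegral ComplexConjugate

noncomputable section

/-- Associated Legendre function `P_ℓ^m` for nonnegative order `m`. -/
def assocLegendrePos (l m : ℕ) (x : ℝ) : ℝ :=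
  ((-1 : ℝ) ^ m / ((2 : ℝ) ^ l * (Nat.factorial l : ℝ))) *
    (1 - x ^ 2) ^ ((m : ℝ) / 2) *
    iteratedDeriv (l + m) (fun t : ℝ => (t ^ 2 - 1) ^ l) x

/-- Associated Legendre function `P_ℓ^m` for integer order `m`. -/
def assocLegendre (l : ℕ) (m : ℤ) (x : ℝ) : ℝ :=
  if 0 ≤ m then assocLegendrePos l m.toNat x
  else ((-1 : ℝ) ^ (-m).toNat *
    ((Nat.factorial (l - (-m).toNat) : ℝ) / (Nat.factorial (l + (-m).toNat) : ℝ))) *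
    assocLegendrePos l (-m).toNat x

/-- Spherical harmonic normalization factor `N_ℓ^m`. -/
def shNorm (l : ℕ) (m : ℤ) : ℝ :=
  Real.sqrt ((2 * l + 1) / (4 * π) *
    ((Nat.factorial ((l : ℤ) - m).toNat : ℝ) / (Nat.factorial ((l : ℤ) + m).toNat : ℝ)))

/-- Spherical harmonic `Y_ℓ^m(θ, φ)`. -/
def sphHarm (l : ℕ) (m : ℤ) (θ φ : ℝ) : ℂ :=
  ((shNorm l m * assocLegendre l m (Real.cos θ) : ℝ) : ℂ) *
    Complex.exp (Complex.I * (m : ℂ) * (φ : ℂ))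

/-- Spherical harmonic coefficient `⟨f, Y_ℓ^m⟩ = ∫_{S²} f conj(Y_ℓ^m) ds`. -/
def shc (f : ℝ → ℝ → ℂ) (l : ℕ) (m : ℤ) : ℂ :=
  ∫ θ in (0 : ℝ)..π,
    (∫ φ in (0 : ℝ)..(2 * π), f θ φ * conj (sphHarm l m θ φ)) * ((Real.sin θ : ℝ) : ℂ)

/-- Degree `ℓ = ⌊√n⌋` of the single index `n`. -/
def deg (n : ℕ) : ℕ := Nat.sqrt n

/-- Order `m = n − ⌊√n⌋² − ⌊√n⌋` of the single index `n`. -/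
def ord (n : ℕ) : ℤ := (n : ℤ) - (Nat.sqrt n : ℤ) ^ 2 - (Nat.sqrt n : ℤ)

/-- Spherical harmonic `Y_n` under the index bijection `n = ℓ² + ℓ + m`. -/
def sphHarmIdx (n : ℕ) (θ φ : ℝ) : ℂ := sphHarm (deg n) (ord n) θ φ

/-- Spherical harmonic triple product `T(c; r; n) = ∫ Y_c Y_r conj(Y_n) ds`. -/
def tripleProd (c r n : ℕ) : ℂ :=
  shc (fun θ φ => sphHarmIdx r θ φ * sphHarmIdx c θ φ) (deg n) (ord n)

open Polynomial

lemma iteratedDeriv_polyEval (P : Polynomial ℝ) (n : ℕ) :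
    iteratedDeriv n (fun x : ℝ => P.eval x) = fun x => (derivative^[n] P).eval x := by
  induction n with
  | zero => simp
  | succ k ih =>
    rw [iteratedDeriv_succ, ih]
    funext x
    rw [Function.iterate_succ_apply']
    exact Polynomial.deriv _

lemma assocLegendrePos_eq (l m : ℕ) : assocLegendrePos l m = fun x =>
    ((-1 : ℝ) ^ m / ((2 : ℝ) ^ l * (Nat.factorial l : ℝ))) * (1 - x ^ 2) ^ ((m : ℝ) / 2) *
      (derivative^[l + m] ((X ^ 2 - 1 : Polynomial ℝ) ^ l)).eval x := by
  funext x
  unfold assocLegendrePos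
  rw [show (fun t : ℝ => (t ^ 2 - 1) ^ l) = fun t => ((X ^ 2 - 1 : Polynomial ℝ) ^ l).eval t from
    by funext t; simp, iteratedDeriv_polyEval]

lemma natDegree_XsqSubOne_pow (l : ℕ) :
    ((X ^ 2 - 1 : Polynomial ℝ) ^ l).natDegree = 2 * l := by
  rw [natDegree_pow, show (X ^ 2 - 1 : Polynomial ℝ) = X ^ 2 - C 1 from by rw [map_one],
    natDegree_X_pow_sub_C]
  ring

lemma continuous_assocLegendrePos (l m : ℕ) : Continuous (assocLegendrePos l m) := by
  rw [assocLegendrePos_eq]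
  refine ((continuous_const.mul ((Real.continuous_rpow_const (by positivity)).comp
    (continuous_const.sub (continuous_pow 2)))).mul (Polynomial.continuous _))

lemma dvd_derivative_step (n : ℕ) (P : Polynomial ℝ)
    (h : (X ^ 2 - 1 : Polynomial ℝ) ^ n ∣ P) :
    (X ^ 2 - 1 : Polynomial ℝ) ^ (n - 1) ∣ derivative P := by
  rcases n with _ | k
  · simp
  obtain ⟨S, rfl⟩ := h
  rw [derivative_mul, derivative_pow]
  simp only [Nat.add_sub_cancel]
  refine dvd_add (Dvd.dvd.mul_right ?_ S) (dvd_mul_of_dvd_left (pow_dvd_pow _ (by omega)) _)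
  exact dvd_mul_of_dvd_left (dvd_mul_left _ _) _

lemma dvd_iterate_derivative (n j : ℕ) (P : Polynomial ℝ)
    (h : (X ^ 2 - 1 : Polynomial ℝ) ^ n ∣ P) :
    (X ^ 2 - 1 : Polynomial ℝ) ^ (n - j) ∣ derivative^[j] P := by
  induction j generalizing n P with
  | zero => simpa using h
  | succ k ih =>
    rw [Function.iterate_succ_apply]
    have := ih (n - 1) (derivative P) (dvd_derivative_step n P h)
    rwa [Nat.sub_sub, Nat.add_comm 1 k] at this

lemma eval_eq_zero_of_dvd {n : ℕ} (hn : n ≠ 0) {P : Polynomial ℝ}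
    (h : (X ^ 2 - 1 : Polynomial ℝ) ^ n ∣ P) {x : ℝ} (hx : x ^ 2 = 1) : P.eval x = 0 := by
  obtain ⟨S, rfl⟩ := h
  simp [hx, zero_pow hn]

lemma ibp_once (P W : Polynomial ℝ) :
    ∫ x in (-1:ℝ)..1, (derivative P).eval x * W.eval x
      = P.eval 1 * W.eval 1 - P.eval (-1) * W.eval (-1)
        - ∫ x in (-1:ℝ)..1, P.eval x * (derivative W).eval x := by
  have h := intervalIntegral.integral_mul_deriv_eq_deriv_mul
    (a := (-1:ℝ)) (b := 1)
    (u := fun x => W.eval x) (v := fun x => P.eval x)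
    (u' := fun x => (derivative W).eval x) (v' := fun x => (derivative P).eval x)
    (fun x _ => Polynomial.hasDerivAt _ x) (fun x _ => Polynomial.hasDerivAt _ x)
    ((Polynomial.continuous _).intervalIntegrable _ _)
    ((Polynomial.continuous _).intervalIntegrable _ _)
  have e1 : ∀ Q R : Polynomial ℝ, (∫ x in (-1:ℝ)..1, Q.eval x * R.eval x)
      = ∫ x in (-1:ℝ)..1, R.eval x * Q.eval x := by
    intro Q R; congr 1; funext x; ring
  rw [e1] at h
  rw [h, e1 (derivative W) P]
  ring

lemma ibp_poly (k : ℕ) (P W : Polynomial ℝ)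
    (hb : ∀ j, j < k → ∀ x : ℝ, x ^ 2 = 1 →
      (derivative^[k - 1 - j] P).eval x * (derivative^[j] W).eval x = 0) :
    ∫ x in (-1:ℝ)..1, (derivative^[k] P).eval x * W.eval x
      = (-1:ℝ) ^ k * ∫ x in (-1:ℝ)..1, P.eval x * (derivative^[k] W).eval x := by
  induction k generalizing P W with
  | zero => simp
  | succ k ih =>
    rw [Function.iterate_succ_apply]
    rw [ih (derivative P) W (by
      intro j hj x hx
      have := hb j (by omega) x hx
      rwa [show k + 1 - 1 - j = k - 1 - j + 1 from by omega,
        Function.iterate_succ_apply] at this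
      )]
    have h1 := hb k (by omega) 1 (by norm_num)
    have h2 := hb k (by omega) (-1) (by norm_num)
    simp only [Nat.add_sub_cancel, Nat.sub_self, Function.iterate_zero, id_eq] at h1 h2
    rw [ibp_once P (derivative^[k] W), h1, h2, ← Function.iterate_succ_apply' derivative]
    ring

lemma legendrePos_orth {l p : ℕ} (m : ℕ) (hlp : l < p) :
    ∫ x in (-1:ℝ)..1, assocLegendrePos l m x * assocLegendrePos p m x = 0 := by
  by_cases hml : l < m
  · have hz : ∀ x : ℝ, assocLegendrePos l m x = 0 := by
      intro x
      rw [assocLegendrePos_eq]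
      rw [Polynomial.iterate_derivative_eq_zero (by rw [natDegree_XsqSubOne_pow]; omega)]
      simp
    simp [hz]
  push_neg at hml
  set W : Polynomial ℝ := (1 - X ^ 2) ^ m * derivative^[l + m] ((X ^ 2 - 1) ^ l) with hWdef
  have hWdvd : (X ^ 2 - 1 : Polynomial ℝ) ^ m ∣ W := by
    refine dvd_mul_of_dvd_left (pow_dvd_pow_of_dvd ⟨-1, by ring⟩ m) _
  have natDeg1X : ((1 - X ^ 2 : Polynomial ℝ)).natDegree = 2 := by
    rw [show (1 - X ^ 2 : Polynomial ℝ) = -(X ^ 2 - C 1) from by rw [map_one]; ring,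
      natDegree_neg, natDegree_X_pow_sub_C]
  have key : Set.EqOn (fun x => assocLegendrePos l m x * assocLegendrePos p m x)
      (fun x => (((-1 : ℝ) ^ m / ((2 : ℝ) ^ l * (Nat.factorial l : ℝ)))
          * ((-1 : ℝ) ^ m / ((2 : ℝ) ^ p * (Nat.factorial p : ℝ)))) *
        ((derivative^[p + m] ((X ^ 2 - 1 : Polynomial ℝ) ^ p)).eval x * W.eval x))
      (Set.uIcc (-1 : ℝ) 1) := by
    intro x hx
    have hx' : x ^ 2 ≤ 1 := by
      rw [Set.uIcc_of_le (by norm_num)] at hx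
      nlinarith [hx.1, hx.2]
    have h0 : (0:ℝ) ≤ 1 - x ^ 2 := by linarith
    have hr : (1 - x ^ 2) ^ ((m : ℝ) / 2) * (1 - x ^ 2) ^ ((m : ℝ) / 2)
        = (1 - x ^ 2) ^ m := by
      rw [← Real.rpow_add_of_nonneg h0 (by positivity) (by positivity),
        ← Real.rpow_natCast (1 - x ^ 2) m]
      norm_num
    simp only [assocLegendrePos_eq, hWdef, eval_mul, eval_pow, eval_sub, eval_one, eval_X]
    rw [← hr]
    ring
  rw [intervalIntegral.integral_congr key, intervalIntegral.integral_const_mul,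
    ibp_poly (p + m) _ W (by
      intro j hj x hx
      by_cases hjm : j < m
      · rw [eval_eq_zero_of_dvd (n := m - j) (by omega)
          (dvd_iterate_derivative m j W hWdvd) hx, mul_zero]
      · rw [eval_eq_zero_of_dvd (n := p - (p + m - 1 - j)) (by omega)
          (dvd_iterate_derivative p (p + m - 1 - j) _ dvd_rfl) hx, zero_mul])]
  have hWz : derivative^[p + m] W = 0 := by
    apply Polynomial.iterate_derivative_eq_zero
    calc W.natDegree ≤ ((1 - X ^ 2 : Polynomial ℝ) ^ m).natDegree
        + (derivative^[l + m] ((X ^ 2 - 1 : Polynomial ℝ) ^ l)).natDegree :=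
          natDegree_mul_le
      _ ≤ 2 * m + (2 * l - (l + m)) := by
          refine add_le_add ?_ ((natDegree_iterate_derivative _ _).trans
            (by rw [natDegree_XsqSubOne_pow]))
          rw [natDegree_pow, natDeg1X]
          omega
      _ < p + m := by omega
  rw [hWz]
  simp

-- change of variables x = cos θ

lemma integral_cosSub (G : ℝ → ℝ) (hG : Continuous G) :
    ∫ θ in (0:ℝ)..π, G (Real.cos θ) * Real.sin θ = ∫ x in (-1:ℝ)..1, G x := by
  have h := intervalIntegral.integral_comp_smul_deriv (a := (0:ℝ)) (b := π)
    (f := Real.cos) (f' := fun θ => -Real.sin θ) (g := G)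
    (fun x _ => (Real.hasDerivAt_cos x)) (by fun_prop) hG
  rw [Real.cos_zero, Real.cos_pi] at h
  have h2 : (∫ θ in (0:ℝ)..π, (-Real.sin θ) • (G ∘ Real.cos) θ)
      = -∫ θ in (0:ℝ)..π, G (Real.cos θ) * Real.sin θ := by
    rw [← intervalIntegral.integral_neg]
    congr 1; funext θ; simp [mul_comm]
  rw [h2, intervalIntegral.integral_symm (-1) 1] at h
  linarith [h]

-- orthogonality for integer orders

lemma assocLegendre_exists (l : ℕ) (m : ℤ) :
    ∃ c : ℝ, ∀ x, assocLegendre l m x = c * assocLegendrePos l m.natAbs x := by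
  unfold assocLegendre
  by_cases h : 0 ≤ m
  · refine ⟨1, fun x => ?_⟩
    rw [if_pos h, one_mul, show m.toNat = m.natAbs from by omega]
  · refine ⟨((-1 : ℝ) ^ (-m).toNat *
      ((Nat.factorial (l - (-m).toNat) : ℝ) / (Nat.factorial (l + (-m).toNat) : ℝ))),
      fun x => ?_⟩
    rw [if_neg h, show (-m).toNat = m.natAbs from by omega]

lemma legendre_orth {l p : ℕ} (m q : ℤ) (hq : q.natAbs = m.natAbs) (hlp : l < p) :
    ∫ θ in (0:ℝ)..π, (assocLegendre l m (Real.cos θ) * assocLegendre p q (Real.cos θ))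
      * Real.sin θ = 0 := by
  obtain ⟨c1, h1⟩ := assocLegendre_exists l m
  obtain ⟨c2, h2⟩ := assocLegendre_exists p q
  have key := integral_cosSub (fun x => (c1 * c2) *
      (assocLegendrePos l m.natAbs x * assocLegendrePos p m.natAbs x))
    (continuous_const.mul ((continuous_assocLegendrePos l m.natAbs).mul
      (continuous_assocLegendrePos p m.natAbs)))
  rw [intervalIntegral.integral_const_mul, legendrePos_orth m.natAbs hlp, mul_zero] at key
  rw [← key]
  congr 1
  funext θ
  rw [h1, h2, hq]
  ring

lemma continuous_assocLegendre (l : ℕ) (m : ℤ) : Continuous (assocLegendre l m) := by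
  unfold assocLegendre
  by_cases h : 0 ≤ m
  · simpa [h] using continuous_assocLegendrePos l m.toNat
  · simp only [h, ↓reduceIte]
    exact continuous_const.mul (continuous_assocLegendrePos l (-m).toNat)

lemma continuous_sphHarm (l : ℕ) (m : ℤ) :
    Continuous (fun pp : ℝ × ℝ => sphHarm l m pp.1 pp.2) := by
  unfold sphHarm
  apply Continuous.mul
  · exact Complex.continuous_ofReal.comp (continuous_const.mul
      ((continuous_assocLegendre l m).comp (Real.continuous_cos.comp continuous_fst)))
  · exact Complex.continuous_exp.comp (continuous_const.mul
      (Complex.continuous_ofReal.comp continuous_snd))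

lemma shc_sum {ι : Type*} (s : Finset ι) (F : ι → ℝ → ℝ → ℂ)
    (hF : ∀ i ∈ s, Continuous (fun pp : ℝ × ℝ => F i pp.1 pp.2)) (l : ℕ) (m : ℤ) :
    shc (fun θ φ => ∑ i ∈ s, F i θ φ) l m = ∑ i ∈ s, shc (F i) l m := by
  unfold shc
  have hcont : ∀ i ∈ s, Continuous
      (fun pp : ℝ × ℝ => F i pp.1 pp.2 * conj (sphHarm l m pp.1 pp.2)) := fun i hi =>
    (hF i hi).mul (Complex.continuous_conj.comp (continuous_sphHarm l m))
  have inner : ∀ θ : ℝ, (∫ φ in (0:ℝ)..(2*π), (∑ i ∈ s, F i θ φ) * conj (sphHarm l m θ φ))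
      = ∑ i ∈ s, ∫ φ in (0:ℝ)..(2*π), F i θ φ * conj (sphHarm l m θ φ) := by
    intro θ
    rw [← intervalIntegral.integral_finset_sum]
    · congr 1; funext φ; rw [Finset.sum_mul]
    · intro i hi
      exact (((hcont i hi).comp (Continuous.prodMk_right θ)).intervalIntegrable _ _)
  calc (∫ θ in (0:ℝ)..π, (∫ φ in (0:ℝ)..(2*π), (∑ i ∈ s, F i θ φ) * conj (sphHarm l m θ φ))
          * ((Real.sin θ : ℝ) : ℂ))
      = ∫ θ in (0:ℝ)..π, ∑ i ∈ s,
          (∫ φ in (0:ℝ)..(2*π), F i θ φ * conj (sphHarm l m θ φ)) * ((Real.sin θ : ℝ) : ℂ) := by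
        congr 1; funext θ; rw [inner θ, Finset.sum_mul]
    _ = ∑ i ∈ s, ∫ θ in (0:ℝ)..π,
          (∫ φ in (0:ℝ)..(2*π), F i θ φ * conj (sphHarm l m θ φ)) * ((Real.sin θ : ℝ) : ℂ) := by
        apply intervalIntegral.integral_finset_sum
        intro i hi
        apply Continuous.intervalIntegrable
        exact (intervalIntegral.continuous_parametric_intervalIntegral_of_continuous'
          (f := fun θ φ => F i θ φ * conj (sphHarm l m θ φ)) (μ := volume)
          (by exact hcont i hi) 0 (2*π)).mul
          (Complex.continuous_ofReal.comp Real.continuous_sin)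

lemma shc_const_mul (a : ℂ) (F : ℝ → ℝ → ℂ) (l : ℕ) (m : ℤ) :
    shc (fun θ φ => a * F θ φ) l m = a * shc F l m := by
  unfold shc
  simp_rw [mul_assoc, intervalIntegral.integral_const_mul, mul_assoc,
    intervalIntegral.integral_const_mul]

lemma integral_exp_int (k : ℤ) (hk : k ≠ 0) :
    ∫ φ in (0:ℝ)..(2*π), Complex.exp (Complex.I * (k : ℂ) * (φ : ℂ)) = 0 := by
  have hc : (Complex.I * (k : ℂ)) ≠ 0 := by
    simp [Complex.I_ne_zero, hk]
  have h := integral_exp_mul_complex (a := (0:ℝ)) (b := 2*π) hc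
  simp only [mul_assoc] at h ⊢
  rw [h]
  have : Complex.exp (Complex.I * ((k : ℂ) * ((2*π : ℝ) : ℂ))) = 1 := by
    rw [show Complex.I * ((k : ℂ) * ((2*π : ℝ) : ℂ)) = (k : ℂ) * (2 * (π : ℂ) * Complex.I)
      from by push_cast; ring]
    exact Complex.exp_int_mul_two_pi_mul_I k
  rw [this]
  simp

lemma conj_sphHarm (l : ℕ) (m : ℤ) (θ φ : ℝ) :
    conj (sphHarm l m θ φ) = ((shNorm l m * assocLegendre l m (Real.cos θ) : ℝ) : ℂ) *
      Complex.exp (Complex.I * ((-m : ℤ) : ℂ) * (φ : ℂ)) := by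
  unfold sphHarm
  rw [map_mul, Complex.conj_ofReal, ← Complex.exp_conj]
  congr 1
  simp only [map_mul, Complex.conj_I, Complex.conj_ofReal, map_intCast]
  push_cast
  ring_nf

lemma shc_conj_sphHarm_eq_zero (l : ℕ) (m : ℤ) (p : ℕ) (q : ℤ) (h : l < p) :
    shc (fun θ φ => conj (sphHarm l m θ φ)) p q = 0 := by
  unfold shc
  have expand : ∀ θ φ : ℝ, conj (sphHarm l m θ φ) * conj (sphHarm p q θ φ)
      = (((shNorm l m * assocLegendre l m (Real.cos θ)) *
          (shNorm p q * assocLegendre p q (Real.cos θ)) : ℝ) : ℂ) *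
        Complex.exp (Complex.I * ((-(m + q) : ℤ) : ℂ) * (φ : ℂ)) := by
    intro θ φ
    rw [conj_sphHarm, conj_sphHarm, show Complex.I * ((-(m + q) : ℤ) : ℂ) * (φ : ℂ)
      = (Complex.I * ((-m : ℤ) : ℂ) * (φ : ℂ)) + (Complex.I * ((-q : ℤ) : ℂ) * (φ : ℂ)) from
        by push_cast; ring, Complex.exp_add]
    push_cast
    ring
  by_cases hmq : m + q = 0
  · -- q = -m, use Legendre orthogonality
    have inner : ∀ θ : ℝ, (∫ φ in (0:ℝ)..(2*π),
        conj (sphHarm l m θ φ) * conj (sphHarm p q θ φ))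
        = (((shNorm l m * assocLegendre l m (Real.cos θ)) *
            (shNorm p q * assocLegendre p q (Real.cos θ)) : ℝ) : ℂ) * ((2*π : ℝ) : ℂ) := by
      intro θ
      simp_rw [expand θ]
      rw [intervalIntegral.integral_const_mul]
      congr 1
      have : ∀ φ : ℝ, Complex.exp (Complex.I * ((-(m + q) : ℤ) : ℂ) * (φ : ℂ)) = 1 := by
        intro φ; rw [hmq]; simp
      simp_rw [this]
      simp
    simp_rw [inner]
    have hq : q.natAbs = m.natAbs := by omega
    have horth := legendre_orth m q hq h
    calc (∫ θ in (0:ℝ)..π, ((((shNorm l m * assocLegendre l m (Real.cos θ)) *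
            (shNorm p q * assocLegendre p q (Real.cos θ)) : ℝ) : ℂ) * ((2*π : ℝ) : ℂ))
          * ((Real.sin θ : ℝ) : ℂ))
        = ((shNorm l m * shNorm p q * (2*π) : ℝ) : ℂ) * ((∫ θ in (0:ℝ)..π,
            (assocLegendre l m (Real.cos θ) * assocLegendre p q (Real.cos θ))
              * Real.sin θ : ℝ) : ℂ) := by
          rw [← intervalIntegral.integral_ofReal, ← intervalIntegral.integral_const_mul]
          congr 1; funext θ; push_cast; ring
      _ = 0 := by rw [horth]; simp
  · -- φ-integral vanishes
    have inner : ∀ θ : ℝ, (∫ φ in (0:ℝ)..(2*π),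
        conj (sphHarm l m θ φ) * conj (sphHarm p q θ φ)) = 0 := by
      intro θ
      simp_rw [expand θ]
      rw [intervalIntegral.integral_const_mul, integral_exp_int _ (by omega), mul_zero]
    simp_rw [inner]
    simp

/-- The SLSHT distribution component of a band-limited signal
`f = ∑_c f_c Y_c` (degree ≤ `Lf`), computed with an azimuthally symmetric
band-limited window with zonal coefficients `h⁰_p` (degree ≤ `Lh`), satisfies
`g_f(ŷ; n) = ∑_c f_c ψ_{n,c}(ŷ)` with
`ψ_{n,c}(ŷ) = ∑_{r=0}^{N_h} √(4π/(2p+1)) conj(Y_p^q(ŷ)) h_p⁰ T(c;r;n)`,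
`(p,q) ↔ r`; in particular each `g_f(·; n)` is band-limited with maximum spectral
degree `Lh`, the band-limit of the window. -/
theorem slsht_component_expansion (Lf Lh : ℕ) (fc h0 : ℕ → ℂ) :
    let Nf := Lf ^ 2 + 2 * Lf
    let Nh := Lh ^ 2 + 2 * Lh
    let f : ℝ → ℝ → ℂ := fun θ φ => ∑ c ∈ Finset.range (Nf + 1), fc c * sphHarmIdx c θ φ
    -- rotated window `(D(ŷ)h)(x̂)`, expanded in spherical harmonics
    let Dh : ℝ → ℝ → ℝ → ℝ → ℂ := fun ϑ φ₀ θ φ =>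
      ∑ r ∈ Finset.range (Nh + 1),
        ((Real.sqrt (4 * π / (2 * deg r + 1)) : ℝ) : ℂ) * conj (sphHarmIdx r ϑ φ₀) *
          h0 (deg r) * sphHarmIdx r θ φ
    -- SLSHT distribution component `g_f(ŷ; n)`
    let g : ℝ → ℝ → ℕ → ℂ := fun ϑ φ₀ n =>
      shc (fun θ φ => Dh ϑ φ₀ θ φ * f θ φ) (deg n) (ord n)
    let ψ : ℕ → ℕ → ℝ → ℝ → ℂ := fun n c ϑ φ₀ =>
      ∑ r ∈ Finset.range (Nh + 1),
        ((Real.sqrt (4 * π / (2 * deg r + 1)) : ℝ) : ℂ) * conj (sphHarmIdx r ϑ φ₀) *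
          h0 (deg r) * tripleProd c r n
    (∀ (ϑ φ₀ : ℝ) (n : ℕ), g ϑ φ₀ n = ∑ c ∈ Finset.range (Nf + 1), fc c * ψ n c ϑ φ₀) ∧
    (∀ (n : ℕ) (p : ℕ) (q : ℤ), Lh < p → shc (fun ϑ φ₀ => g ϑ φ₀ n) p q = 0) := by
  intro Nf Nh f Dh g ψ
  have hcY : ∀ k : ℕ, Continuous (fun pp : ℝ × ℝ => sphHarmIdx k pp.1 pp.2) :=
    fun k => continuous_sphHarm _ _
  have part1 : ∀ (ϑ φ₀ : ℝ) (n : ℕ),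
      g ϑ φ₀ n = ∑ c ∈ Finset.range (Nf + 1), fc c * ψ n c ϑ φ₀ := by
    intro ϑ φ₀ n
    have hprod : (fun θ φ => Dh ϑ φ₀ θ φ * f θ φ)
        = fun θ φ => ∑ r ∈ Finset.range (Nh + 1),
            (fun r θ φ => ∑ c ∈ Finset.range (Nf + 1),
              (fun c θ φ =>
                (((Real.sqrt (4 * π / (2 * deg r + 1)) : ℝ) : ℂ) * conj (sphHarmIdx r ϑ φ₀) *
                  h0 (deg r) * fc c) *
                (sphHarmIdx r θ φ * sphHarmIdx c θ φ)) c θ φ) r θ φ := by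
      funext θ φ
      show Dh ϑ φ₀ θ φ * f θ φ = _
      simp only [Dh, f]
      rw [Finset.sum_mul_sum]
      refine Finset.sum_congr rfl fun r _ => Finset.sum_congr rfl fun c _ => by ring
    have hg : g ϑ φ₀ n = shc (fun θ φ => Dh ϑ φ₀ θ φ * f θ φ) (deg n) (ord n) := rfl
    rw [hg, hprod, shc_sum (Finset.range (Nh + 1)) _ (fun r _ =>
      continuous_finset_sum _ fun c _ => continuous_const.mul ((hcY r).mul (hcY c))) _ _]
    have step : ∀ r ∈ Finset.range (Nh + 1),
        shc (fun θ φ => ∑ c ∈ Finset.range (Nf + 1),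
          (fun c θ φ =>
            (((Real.sqrt (4 * π / (2 * deg r + 1)) : ℝ) : ℂ) * conj (sphHarmIdx r ϑ φ₀) *
              h0 (deg r) * fc c) *
            (sphHarmIdx r θ φ * sphHarmIdx c θ φ)) c θ φ) (deg n) (ord n)
        = ∑ c ∈ Finset.range (Nf + 1),
            (((Real.sqrt (4 * π / (2 * deg r + 1)) : ℝ) : ℂ) * conj (sphHarmIdx r ϑ φ₀) *
              h0 (deg r) * fc c) * tripleProd c r n := by
      intro r _
      rw [shc_sum (Finset.range (Nf + 1)) _ (fun c _ =>
        continuous_const.mul ((hcY r).mul (hcY c))) _ _]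
      exact Finset.sum_congr rfl fun c _ => shc_const_mul _ _ _ _
    rw [Finset.sum_congr rfl step, Finset.sum_comm]
    refine Finset.sum_congr rfl fun c _ => ?_
    show _ = fc c * ψ n c ϑ φ₀
    simp only [ψ]
    rw [Finset.mul_sum]
    exact Finset.sum_congr rfl fun r _ => by ring
  refine ⟨part1, ?_⟩
  intro n p q hp
  have hdeg : ∀ r ∈ Finset.range (Nh + 1), deg r ≤ Lh := by
    intro r hr
    rw [Finset.mem_range] at hr
    have hr' : r < (Lh + 1) ^ 2 := by
      have h1 : Lh ^ 2 = Lh * Lh := by ring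
      have h2 : (Lh + 1) ^ 2 = Lh * Lh + 2 * Lh + 1 := by ring
      have h3 : Nh = Lh ^ 2 + 2 * Lh := rfl
      omega
    exact Nat.lt_succ_iff.mp (Nat.sqrt_lt'.mpr hr')
  have hgeq : (fun ϑ φ₀ => g ϑ φ₀ n) = fun ϑ φ₀ => ∑ c ∈ Finset.range (Nf + 1),
      (fun c ϑ φ₀ => ∑ r ∈ Finset.range (Nh + 1),
        (fun r ϑ φ₀ =>
          (fc c * ((Real.sqrt (4 * π / (2 * deg r + 1)) : ℝ) : ℂ) * h0 (deg r) *
            tripleProd c r n) * conj (sphHarmIdx r ϑ φ₀)) r ϑ φ₀) c ϑ φ₀ := by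
    funext ϑ φ₀
    rw [part1 ϑ φ₀ n]
    refine Finset.sum_congr rfl fun c _ => ?_
    show fc c * ψ n c ϑ φ₀ = _
    simp only [ψ]
    rw [Finset.mul_sum]
    exact Finset.sum_congr rfl fun r _ => by ring
  rw [hgeq, shc_sum (Finset.range (Nf + 1)) _ (fun c _ =>
    continuous_finset_sum _ fun r _ => continuous_const.mul
      (Complex.continuous_conj.comp (hcY r))) _ _]
  refine Finset.sum_eq_zero fun c _ => ?_
  rw [shc_sum (Finset.range (Nh + 1)) _ (fun r _ => continuous_const.mul
      (Complex.continuous_conj.comp (hcY r))) _ _]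
  refine Finset.sum_eq_zero fun r hr => ?_
  rw [shc_const_mul]
  have hz : shc (fun ϑ φ₀ => conj (sphHarmIdx r ϑ φ₀)) p q = 0 :=
    shc_conj_sphHarm_eq_zero (deg r) (ord r) p q (lt_of_le_of_lt (hdeg r hr) hp)
  rw [hz, mul_zero]

end
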